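/- Consider a variable-length block code over a DMC whose minimum transition probability is λ := min_{x,y} W(y|x) > 0, with message set M of size |M| ≥ 2, message uniformly distributed, decoding time τ satisfying P(τ < ∞) = 1, and decoded message M̂. Then the average error probability satisfies P_e ≥ ((|M|−1)/|M|) · E[(λ/(1−λ))^τ]. In particular P_e > 0. -/

import Mathlib

open scoped BigOperators

noncomputable section

/-- Likelihood of an output history (stored in reverse chronological order: head is the most
recent output) given the message `m`, for a variable-length feedback code with encoder
`enc` (mapping the message and the past outputs to the next channel input) over the
channel `W`. -/
def lik {X Y Msg : Type*} (W : X → Y → ℝ) (enc : Msg → List Y → X) (m : Msg) :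
    List Y → ℝ
  | [] => 1
  | y :: ys => lik W enc m ys * W (enc m ys) y

lemma lik_pos {X Y Msg : Type*} (W : X → Y → ℝ) (lam : ℝ) (hlam : 0 < lam)
    (hlow : ∀ x y, lam ≤ W x y) (enc : Msg → List Y → X) (m : Msg) :
    ∀ ys : List Y, 0 < lik W enc m ys
  | [] => by simp [lik]
  | y :: ys => by
    rw [lik]
    exact mul_pos (lik_pos W lam hlam hlow enc m ys) (hlam.trans_le (hlow _ _))

lemma lam_alt {X Y : Type*} [Fintype Y] (W : X → Y → ℝ) (lam : ℝ) (hlam : 0 < lam)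
    (hlow : ∀ x y, lam ≤ W x y) (hmin : ∃ x y, W x y = lam) (hrow : ∀ x, ∑ y, W x y = 1) :
    lam = 1 ∨ 2 * lam ≤ 1 := by
  classical
  obtain ⟨x0, y0, h0⟩ := hmin
  by_cases hc : 2 ≤ Fintype.card Y
  · right
    obtain ⟨y', hy'⟩ := Fintype.exists_ne_of_one_lt_card (by omega) y0
    have hpair : W x0 y0 + W x0 y' ≤ ∑ z, W x0 z := by
      rw [← Finset.sum_pair (Ne.symm hy')]
      exact Finset.sum_le_sum_of_subset_of_nonneg (Finset.subset_univ _)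
        fun z _ _ => (hlam.trans_le (hlow x0 z)).le
    rw [hrow] at hpair
    have := hlow x0 y'
    linarith
  · left
    have hY : Fintype.card Y = 1 := by
      have : 0 < Fintype.card Y := Fintype.card_pos_iff.mpr ⟨y0⟩
      omega
    have hc1 : (Finset.univ : Finset Y).card = 1 := by rw [Finset.card_univ]; exact hY
    obtain ⟨a, ha⟩ := Finset.card_eq_one.mp hc1
    have hy0 : y0 = a := by
      have := Finset.mem_univ y0
      rw [ha] at this
      simpa using this
    have h1 := hrow x0
    rw [ha, Finset.sum_singleton, ← hy0, h0] at h1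
    exact h1

/-- Any single posterior likelihood ratio between two messages is at least
`(lam/(1-lam))^n`. -/
lemma lik_ratio {X Y Msg : Type*} [Fintype Y] (W : X → Y → ℝ) (lam : ℝ) (hlam : 0 < lam)
    (hlow : ∀ x y, lam ≤ W x y) (hmin : ∃ x y, W x y = lam) (hrow : ∀ x, ∑ y, W x y = 1)
    (enc : Msg → List Y → X) (m m' : Msg) :
    ∀ ys : List Y, (lam / (1 - lam)) ^ ys.length * lik W enc m' ys ≤ lik W enc m ys := by
  classical
  by_cases hc : 2 ≤ Fintype.card Y
  · -- every entry of `W` is at most `1 - lam`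
    have hub : ∀ x y, W x y ≤ 1 - lam := by
      intro x y
      obtain ⟨y', hy'⟩ := Fintype.exists_ne_of_one_lt_card (by omega) y
      have hpair : W x y + W x y' ≤ ∑ z, W x z := by
        rw [← Finset.sum_pair (Ne.symm hy')]
        exact Finset.sum_le_sum_of_subset_of_nonneg (Finset.subset_univ _)
          fun z _ _ => (hlam.trans_le (hlow x z)).le
      rw [hrow] at hpair
      have := hlow x y'
      linarith
    have hlam1 : lam < 1 := by
      obtain ⟨x0, y0, h0⟩ := hmin
      have := hub x0 y0
      have := hlow x0 y0
      linarith
    have h1l : (0:ℝ) < 1 - lam := by linarith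
    have hr0 : 0 ≤ lam / (1 - lam) := div_nonneg hlam.le h1l.le
    intro ys
    induction ys with
    | nil => simp [lik]
    | cons y ys ih =>
      rw [lik, lik, List.length_cons, pow_succ]
      have hl' : 0 ≤ lik W enc m' ys := (lik_pos W lam hlam hlow enc m' ys).le
      have hl : 0 ≤ lik W enc m ys := (lik_pos W lam hlam hlow enc m ys).le
      have key : lam / (1 - lam) * W (enc m' ys) y ≤ lam := by
        have h2 := hub (enc m' ys) y
        calc lam / (1 - lam) * W (enc m' ys) y ≤ lam / (1 - lam) * (1 - lam) :=
              mul_le_mul_of_nonneg_left h2 hr0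
          _ = lam := div_mul_cancel₀ _ h1l.ne'
      calc (lam / (1 - lam)) ^ ys.length * (lam / (1 - lam)) *
            (lik W enc m' ys * W (enc m' ys) y)
          = ((lam / (1 - lam)) ^ ys.length * lik W enc m' ys) *
              (lam / (1 - lam) * W (enc m' ys) y) := by ring
        _ ≤ lik W enc m ys * lam := by
            apply mul_le_mul ih key _ hl
            exact mul_nonneg hr0 ((hlam.trans_le (hlow _ _)).le)
        _ ≤ lik W enc m ys * W (enc m ys) y :=
            mul_le_mul_of_nonneg_left (hlow _ _) hl
  · -- degenerate case: a single output, so `lam = 1` and the ratio is `0`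
    have hlam1 : lam = 1 := by
      rcases lam_alt W lam hlam hlow hmin hrow with h | h
      · exact h
      · exfalso
        obtain ⟨x0, y0, h0⟩ := hmin
        have hY : Fintype.card Y = 1 := by
          have : 0 < Fintype.card Y := Fintype.card_pos_iff.mpr ⟨y0⟩
          omega
        have hc1 : (Finset.univ : Finset Y).card = 1 := by rw [Finset.card_univ]; exact hY
        obtain ⟨a, ha⟩ := Finset.card_eq_one.mp hc1
        have hy0 : y0 = a := by
          have := Finset.mem_univ y0
          rw [ha] at this
          simpa using this
        have h1 := hrow x0
        rw [ha, Finset.sum_singleton, ← hy0, h0] at h1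
        linarith
    have hr : lam / (1 - lam) = 0 := by rw [hlam1]; norm_num
    intro ys
    cases ys with
    | nil => simp [lik]
    | cons y ys =>
      rw [hr, List.length_cons, zero_pow (Nat.succ_ne_zero _), zero_mul]
      exact (lik_pos W lam hlam hlow enc m (y :: ys)).le

/-- Burnashev-type lower bound: for a variable-length block code on a DMC whose minimum
transition probability is `λ > 0`, with `|M| ≥ 2` messages (uniformly distributed),
decoding at the stopping histories `S` (an antichain, reached with probability one, i.e.
`P(τ < ∞) = 1`), the average error probability satisfies
`P_e ≥ ((|M|-1)/|M|) ⬝ E[(λ/(1-λ))^τ]`; in particular `P_e > 0`. -/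
theorem err_ge_of_minTransition {X Y Msg : Type*} [Fintype X] [Fintype Y] [Fintype Msg]
    [DecidableEq Msg]
    (W : X → Y → ℝ) (lam : ℝ) (hlam : 0 < lam)
    (hlow : ∀ x y, lam ≤ W x y) (hmin : ∃ x y, W x y = lam)
    (hrow : ∀ x, ∑ y, W x y = 1)
    (enc : Msg → List Y → X) (S : Set (List Y)) (dec : List Y → Msg)
    (hM : 2 ≤ Fintype.card Msg)
    (hanti : ∀ ys ∈ S, ∀ zs ∈ S, ys <:+ zs → ys = zs)
    (hstop : ∑' ys : S, (Fintype.card Msg : ℝ)⁻¹ * ∑ m, lik W enc m (ys : List Y) = 1) :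
    ((Fintype.card Msg : ℝ) - 1) / (Fintype.card Msg : ℝ) *
        ∑' ys : S, (Fintype.card Msg : ℝ)⁻¹ * (∑ m, lik W enc m (ys : List Y)) *
          (lam / (1 - lam)) ^ (ys : List Y).length
      ≤ (∑' ys : S, (Fintype.card Msg : ℝ)⁻¹ *
          ∑ m, (if dec (ys : List Y) = m then 0 else lik W enc m (ys : List Y))) ∧
    0 < ∑' ys : S, (Fintype.card Msg : ℝ)⁻¹ *
          ∑ m, (if dec (ys : List Y) = m then 0 else lik W enc m (ys : List Y)) := by
  classical
  set N : ℝ := (Fintype.card Msg : ℝ) with hNdef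
  have hN2 : (2:ℝ) ≤ N := by rw [hNdef]; exact_mod_cast hM
  have hNpos : (0:ℝ) < N := by linarith
  set r : ℝ := lam / (1 - lam) with hrdef
  have hralt := lam_alt W lam hlam hlow hmin hrow
  have hr0 : 0 ≤ r := by
    rcases hralt with h | h
    · simp [hrdef, h]
    · exact div_nonneg hlam.le (by linarith)
  have hr1 : r ≤ 1 := by
    rcases hralt with h | h
    · simp [hrdef, h]
    · rw [hrdef, div_le_one (by linarith)]; linarith
  have hlpos : ∀ (m : Msg) (ys : List Y), 0 < lik W enc m ys :=
    fun m ys => lik_pos W lam hlam hlow enc m ys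
  -- decompose the error sum at each history
  have herase : ∀ ys : List Y,
      ∑ m, (if dec ys = m then 0 else lik W enc m ys)
        = ∑ m ∈ Finset.univ.erase (dec ys), lik W enc m ys := by
    intro ys
    rw [Finset.sum_erase_eq_sub (Finset.mem_univ (dec ys))]
    have : ∀ m : Msg, (if dec ys = m then 0 else lik W enc m ys)
        = lik W enc m ys - (if dec ys = m then lik W enc m ys else 0) := by
      intro m; split <;> simp
    rw [Finset.sum_congr rfl fun m _ => this m, Finset.sum_sub_distrib,
      Finset.sum_ite_eq Finset.univ (dec ys) (fun m => lik W enc m ys)]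
    simp
  -- pointwise key inequality
  have key : ∀ ys : List Y,
      (N - 1) / N * (N⁻¹ * (∑ m, lik W enc m ys) * r ^ ys.length)
        ≤ N⁻¹ * ∑ m, (if dec ys = m then 0 else lik W enc m ys) := by
    intro ys
    set T : ℝ := ∑ m, lik W enc m ys with hTdef
    have hm : ∀ m : Msg, r ^ ys.length * T ≤ N * lik W enc m ys := by
      intro m
      rw [hTdef, Finset.mul_sum]
      calc ∑ m', r ^ ys.length * lik W enc m' ys ≤ ∑ _m' : Msg, lik W enc m ys :=
            Finset.sum_le_sum fun m' _ =>
              lik_ratio W lam hlam hlow hmin hrow enc m m' ys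
        _ = N * lik W enc m ys := by
            rw [Finset.sum_const, Finset.card_univ, nsmul_eq_mul]
  -- sum the key inequality over the erased set
    have hcard : ((Finset.univ.erase (dec ys)).card : ℝ) = N - 1 := by
      rw [Finset.card_erase_of_mem (Finset.mem_univ _), Finset.card_univ]
      have h1 : 1 ≤ Fintype.card Msg := by omega
      push_cast [Nat.cast_sub h1]
      rfl
    have hsum : (N - 1) * (r ^ ys.length * T)
        ≤ N * (T - lik W enc (dec ys) ys) := by
      have h2 : ∑ _m ∈ Finset.univ.erase (dec ys), (r ^ ys.length * T)
          ≤ ∑ m ∈ Finset.univ.erase (dec ys), N * lik W enc m ys :=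
        Finset.sum_le_sum fun m _ => hm m
      rw [Finset.sum_const, nsmul_eq_mul, hcard, ← Finset.mul_sum,
        Finset.sum_erase_eq_sub (Finset.mem_univ (dec ys))] at h2
      exact h2
    rw [herase ys, Finset.sum_erase_eq_sub (Finset.mem_univ (dec ys))]
    have hN2pos : (0:ℝ) < N ^ 2 := by positivity
    calc (N - 1) / N * (N⁻¹ * T * r ^ ys.length)
        = ((N - 1) * (r ^ ys.length * T)) / N ^ 2 := by
          field_simp
      _ ≤ (N * (T - lik W enc (dec ys) ys)) / N ^ 2 :=
          (div_le_div_iff_of_pos_right hN2pos).mpr hsum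
      _ = N⁻¹ * (T - lik W enc (dec ys) ys) := by
          field_simp
  -- nonnegativity and comparison of the three summands
  have hg0 : ∀ ys : S, 0 ≤ N⁻¹ * ∑ m, lik W enc m (ys : List Y) := by
    intro ys
    exact mul_nonneg (by positivity)
      (Finset.sum_nonneg fun m _ => (hlpos m _).le)
  have hf0 : ∀ ys : S,
      0 ≤ N⁻¹ * ∑ m, (if dec (ys : List Y) = m then 0 else lik W enc m (ys : List Y)) := by
    intro ys
    refine mul_nonneg (by positivity) (Finset.sum_nonneg fun m _ => ?_)
    split
    · exact le_refl 0
    · exact (hlpos m _).le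
  have hgsum : Summable (fun ys : S => N⁻¹ * ∑ m, lik W enc m (ys : List Y)) := by
    by_contra hns
    rw [tsum_eq_zero_of_not_summable hns] at hstop
    norm_num at hstop
  have hfg : ∀ ys : S,
      N⁻¹ * ∑ m, (if dec (ys : List Y) = m then 0 else lik W enc m (ys : List Y))
        ≤ N⁻¹ * ∑ m, lik W enc m (ys : List Y) := by
    intro ys
    refine mul_le_mul_of_nonneg_left (Finset.sum_le_sum fun m _ => ?_) (by positivity)
    split
    · exact (hlpos m _).le
    · exact le_refl _
  have hfsum : Summable (fun ys : S =>
      N⁻¹ * ∑ m, (if dec (ys : List Y) = m then 0 else lik W enc m (ys : List Y))) :=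
    Summable.of_nonneg_of_le hf0 hfg hgsum
  have hhg : ∀ ys : S,
      N⁻¹ * (∑ m, lik W enc m (ys : List Y)) * r ^ (ys : List Y).length
        ≤ N⁻¹ * ∑ m, lik W enc m (ys : List Y) := by
    intro ys
    have := pow_le_one₀ hr0 hr1 (n := (ys : List Y).length)
    calc N⁻¹ * (∑ m, lik W enc m (ys : List Y)) * r ^ (ys : List Y).length
        ≤ N⁻¹ * (∑ m, lik W enc m (ys : List Y)) * 1 :=
          mul_le_mul_of_nonneg_left this (hg0 ys)
      _ = N⁻¹ * ∑ m, lik W enc m (ys : List Y) := by ring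
  have hh0 : ∀ ys : S,
      0 ≤ N⁻¹ * (∑ m, lik W enc m (ys : List Y)) * r ^ (ys : List Y).length := by
    intro ys
    exact mul_nonneg (hg0 ys) (pow_nonneg hr0 _)
  have hhsum : Summable (fun ys : S =>
      N⁻¹ * (∑ m, lik W enc m (ys : List Y)) * r ^ (ys : List Y).length) :=
    Summable.of_nonneg_of_le hh0 hhg hgsum
  constructor
  · calc (N - 1) / N *
        ∑' ys : S, N⁻¹ * (∑ m, lik W enc m (ys : List Y)) * r ^ (ys : List Y).length
        = ∑' ys : S, (N - 1) / N *
            (N⁻¹ * (∑ m, lik W enc m (ys : List Y)) * r ^ (ys : List Y).length) :=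
          tsum_mul_left.symm
      _ ≤ ∑' ys : S, N⁻¹ *
            ∑ m, (if dec (ys : List Y) = m then 0 else lik W enc m (ys : List Y)) :=
          Summable.tsum_le_tsum (fun ys => key (ys : List Y)) (hhsum.mul_left _) hfsum
  · have hSne : Nonempty S := by
      by_contra hne
      haveI : IsEmpty S := not_nonempty_iff.mp hne
      rw [tsum_empty] at hstop
      norm_num at hstop
    obtain ⟨ys0⟩ := hSne
    have hfp : 0 < N⁻¹ *
        ∑ m, (if dec (ys0 : List Y) = m then 0 else lik W enc m (ys0 : List Y)) := by
      rw [herase (ys0 : List Y)]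
      refine mul_pos (by positivity) (Finset.sum_pos (fun m _ => hlpos m _) ?_)
      rw [← Finset.card_pos, Finset.card_erase_of_mem (Finset.mem_univ _),
        Finset.card_univ]
      omega
    exact hfp.trans_le (Summable.le_tsum hfsum ys0 fun j _ => hf0 j)

end
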